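/- arXiv:2604.04678 — 3 statements merged into one kernel-verified Lean document; each statement's English description precedes it below -/
import Mathlib

section
/- Let q be a power of 2 and S_0 = F_{q^2} \ F_q. The map β ↦ β^{q+1}/(β^q + β) from S_0 to F_q^* is well defined, and each fiber has exactly q elements; in particular S_0 is partitioned into q − 1 subsets of size q. -/
lemma aux_char2 (m q : ℕ) (hm : 0 < m) (hq : q = 2 ^ m) (K : Type) [Field K] [Fintype K]
    (hK : Fintype.card K = q ^ 2) : CharP K 2 := by
  obtain ⟨p, hp⟩ := CharP.exists K
  haveI := hp
  obtain ⟨n, hn, hcard⟩ := FiniteField.card K p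
  have hdvd : p ∣ 2 ^ (m * 2) := by
    have : p ∣ p ^ (n : ℕ) := dvd_pow_self p n.pos.ne'
    rw [← hcard, hK, hq, ← pow_mul] at this
    exact this
  have : p = 2 :=
    (Nat.prime_dvd_prime_iff_eq hn Nat.prime_two).mp (hn.dvd_of_dvd_pow hdvd)
  rwa [this] at hp

lemma aux_cardF (m q : ℕ) (hm : 0 < m) (hq : q = 2 ^ m) (K : Type) [Field K] [Fintype K]
    (hK : Fintype.card K = q ^ 2) :
    Set.ncard {x : K | x ^ q = x} = q := by
  classical
  haveI : CharP K 2 := aux_char2 m q hm hq K hK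
  have hq1 : 1 < q := by rw [hq]; exact Nat.one_lt_two_pow_iff.mpr hm.ne'
  have hq0 : q ≠ 0 := by omega
  have hfrob : ∀ x y : K, (x + y) ^ q = x ^ q + y ^ q := by
    intro x y; rw [hq]; exact add_pow_char_pow x y 2 m
  have hfix : ∀ x : K, (x ^ q) ^ q = x := by
    intro x
    rw [← pow_mul, show q * q = q ^ 2 from (sq q).symm, ← hK]
    exact FiniteField.pow_card x
  have hupper : Set.ncard {x : K | x ^ q = x} ≤ q := by
    have hco : (Polynomial.X ^ q + Polynomial.X : Polynomial K).coeff q = 1 := by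
      rw [Polynomial.coeff_add, Polynomial.coeff_X_pow, if_pos rfl,
        Polynomial.coeff_X, if_neg (by omega)]
      simp
    have hne : (Polynomial.X ^ q + Polynomial.X : Polynomial K) ≠ 0 := fun h => by
      rw [h] at hco; simp at hco
    have hsub : {x : K | x ^ q = x} ⊆
        ((Polynomial.X ^ q + Polynomial.X : Polynomial K).roots.toFinset : Set K) := by
      intro x hx
      simp only [Set.mem_setOf_eq] at hx
      simp only [Finset.mem_coe, Multiset.mem_toFinset, Polynomial.mem_roots hne]
      simp [Polynomial.IsRoot, hx, CharTwo.add_self_eq_zero]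
    calc Set.ncard {x : K | x ^ q = x}
        ≤ Set.ncard ((Polynomial.X ^ q + Polynomial.X : Polynomial K).roots.toFinset : Set K) :=
          Set.ncard_le_ncard hsub (Set.toFinite _)
      _ = (Polynomial.X ^ q + Polynomial.X : Polynomial K).roots.toFinset.card :=
          Set.ncard_coe_finset _
      _ ≤ Multiset.card (Polynomial.X ^ q + Polynomial.X : Polynomial K).roots :=
          Multiset.toFinset_card_le _
      _ ≤ (Polynomial.X ^ q + Polynomial.X : Polynomial K).natDegree :=
          Polynomial.card_roots' _
      _ ≤ q := by
          refine le_trans (Polynomial.natDegree_add_le _ _) ?_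
          simp [Polynomial.natDegree_X_pow, Polynomial.natDegree_X]
          omega
  let φ : K →+ K :=
    { toFun := fun x => x ^ q + x,
      map_zero' := by simp [zero_pow hq0],
      map_add' := fun x y => by
        show (x + y) ^ q + (x + y) = x ^ q + x + (y ^ q + y)
        rw [hfrob]; ring }
  have hkerset : (φ.ker : Set K) = {x : K | x ^ q = x} := by
    ext x
    simp only [SetLike.mem_coe, AddMonoidHom.mem_ker, Set.mem_setOf_eq]
    show x ^ q + x = 0 ↔ x ^ q = x
    constructor
    · intro h
      have := eq_neg_of_add_eq_zero_left h
      rwa [CharTwo.neg_eq] at this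
    · intro h; rw [h, CharTwo.add_self_eq_zero]
  have hrange : φ.range ≤ φ.ker := by
    rintro y ⟨x, rfl⟩
    rw [AddMonoidHom.mem_ker]
    show (x ^ q + x) ^ q + (x ^ q + x) = 0
    rw [hfrob, hfix]
    linear_combination CharTwo.add_self_eq_zero x + CharTwo.add_self_eq_zero (x ^ q)
  have h1 : Nat.card K = Nat.card (K ⧸ φ.ker) * Nat.card φ.ker :=
    AddSubgroup.card_eq_card_quotient_mul_card_addSubgroup φ.ker
  have h2 : Nat.card (K ⧸ φ.ker) = Nat.card φ.range :=
    Nat.card_congr (QuotientAddGroup.quotientKerEquivRange φ).toEquiv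
  have hkercard : Nat.card φ.ker = Set.ncard {x : K | x ^ q = x} := by
    rw [← hkerset]; exact Nat.card_coe_set_eq _
  have hrangecard : Nat.card φ.range ≤ Nat.card φ.ker := by
    have e1 : Nat.card φ.range = ((φ.range : Set K)).ncard := Nat.card_coe_set_eq _
    have e2 : Nat.card φ.ker = ((φ.ker : Set K)).ncard := Nat.card_coe_set_eq _
    rw [e1, e2]
    exact Set.ncard_le_ncard hrange (Set.toFinite _)
  have hcardK : Nat.card K = q * q := by rw [Nat.card_eq_fintype_card, hK, sq]
  set k := Set.ncard {x : K | x ^ q = x} with hk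
  have hmul : q * q = Nat.card φ.range * k := by rw [← hcardK, h1, h2, hkercard]
  have hle : q * q ≤ q * k := by
    calc q * q = Nat.card φ.range * k := hmul
      _ ≤ k * k := Nat.mul_le_mul_right k (hrangecard.trans_eq hkercard)
      _ ≤ q * k := Nat.mul_le_mul_right k hupper
  exact le_antisymm hupper (Nat.le_of_mul_le_mul_left hle (by omega))
/-- Let `q` be a power of `2` and `S_0 = F_{q^2} \ F_q`.  The map
`β ↦ β^{q+1} / (β^q + β)` from `S_0` to `F_q^*` is well defined, and each fiber
has exactly `q` elements; in particular `S_0` is partitioned into `q - 1`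
subsets of size `q`. -/
theorem stmt6 (m q : ℕ) (hm : 0 < m) (hq : q = 2 ^ m)
    (K : Type) [Field K] [Fintype K] (hK : Fintype.card K = q ^ 2) :
    (∀ β : K, β ^ q ≠ β →
        (β ^ (q + 1) / (β ^ q + β)) ^ q = β ^ (q + 1) / (β ^ q + β) ∧
          β ^ (q + 1) / (β ^ q + β) ≠ 0) ∧
    (∀ b : K, b ^ q = b → b ≠ 0 →
        Set.ncard {β : K | β ^ q ≠ β ∧ β ^ (q + 1) / (β ^ q + β) = b} = q) ∧
    Set.ncard {β : K | β ^ q ≠ β} = (q - 1) * q := by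
  classical
  haveI : CharP K 2 := aux_char2 m q hm hq K hK
  have hq1 : 1 < q := by rw [hq]; exact Nat.one_lt_two_pow_iff.mpr hm.ne'
  have hq0 : q ≠ 0 := by omega
  have hfrob : ∀ x y : K, (x + y) ^ q = x ^ q + y ^ q := fun x y => by
    rw [hq]; exact add_pow_char_pow x y 2 m
  have hfix : ∀ x : K, (x ^ q) ^ q = x := fun x => by
    rw [← pow_mul, show q * q = q ^ 2 from (sq q).symm, ← hK]
    exact FiniteField.pow_card x
  have part1 : ∀ β : K, β ^ q ≠ β →
      (β ^ (q + 1) / (β ^ q + β)) ^ q = β ^ (q + 1) / (β ^ q + β) ∧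
        β ^ (q + 1) / (β ^ q + β) ≠ 0 := by
    intro β hβ
    have hβ0 : β ≠ 0 := fun h => hβ (by rw [h, zero_pow hq0])
    have hden : β ^ q + β ≠ 0 := by
      intro h
      have := eq_neg_of_add_eq_zero_left h
      rw [CharTwo.neg_eq] at this
      exact hβ this
    have hfixq : ∀ x : K, x ^ (q * q) = x := fun x => by rw [pow_mul]; exact hfix x
    have hnum : (β ^ (q + 1)) ^ q = β ^ (q + 1) := by
      rw [← pow_mul, show (q + 1) * q = q * q + q by ring, pow_add, hfixq, pow_succ]
      exact mul_comm β (β ^ q)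
    have hdenq : (β ^ q + β) ^ q = β ^ q + β := by rw [hfrob, hfix, add_comm]
    exact ⟨by rw [div_pow, hnum, hdenq], div_ne_zero (pow_ne_zero _ hβ0) hden⟩
  let f : K → K := fun β => β ^ (q + 1) / (β ^ q + β)
  let S0 : Finset K := Finset.univ.filter (fun β => β ^ q ≠ β)
  let fib : K → Finset K := fun b => Finset.univ.filter (fun β => β ^ q ≠ β ∧ f β = b)
  let B : Finset K := Finset.univ.filter (fun b => b ^ q = b ∧ b ≠ 0)
  let F : Finset K := Finset.univ.filter (fun x => x ^ q = x)
  have hFcard : F.card = q := by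
    have hFset : ((F : Finset K) : Set K) = {x : K | x ^ q = x} := by ext x; simp [F]
    have h := aux_cardF m q hm hq K hK
    rw [← hFset, Set.ncard_coe_finset] at h
    exact h
  have hS0card : S0.card = q * q - q := by
    have hS0 : S0 = Finset.univ \ F := by ext β; simp [S0, F]
    rw [hS0, Finset.card_sdiff_of_subset (Finset.subset_univ F), Finset.card_univ, hK, hFcard, sq]
  have hBcard : B.card = q - 1 := by
    have hBF : B = F.erase 0 := by
      ext b; simp [B, F, and_comm]
    rw [hBF, Finset.card_erase_of_mem, hFcard]
    simp [F, zero_pow hq0]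
  have hfib_le : ∀ b : K, (fib b).card ≤ q := by
    intro b
    set Q : Polynomial K := Polynomial.X ^ q + Polynomial.C b * Polynomial.X ^ (q - 1)
        + Polynomial.C b with hQ
    have hco : Q.coeff q = 1 := by
      rw [hQ, Polynomial.coeff_add, Polynomial.coeff_add, Polynomial.coeff_X_pow, if_pos rfl,
        Polynomial.coeff_C_mul, Polynomial.coeff_X_pow, if_neg (by omega),
        Polynomial.coeff_C, if_neg hq0]
      ring
    have hQne : Q ≠ 0 := fun h => by rw [h] at hco; simp at hco
    have hsub : fib b ⊆ Q.roots.toFinset := by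
      intro β hβmem
      simp only [fib, Finset.mem_filter, Finset.mem_univ, true_and] at hβmem
      obtain ⟨hβ, hfβ⟩ := hβmem
      have hβ0 : β ≠ 0 := fun h => hβ (by rw [h, zero_pow hq0])
      have hden : β ^ q + β ≠ 0 := by
        intro h
        have := eq_neg_of_add_eq_zero_left h
        rw [CharTwo.neg_eq] at this
        exact hβ this
      have hrel : β ^ (q + 1) = b * (β ^ q + β) := (div_eq_iff hden).mp hfβ
      have hsplit : β * β ^ (q - 1) = β ^ q := by
        rw [← pow_succ']
        congr 1
        omega
      have hzero : β * (β ^ q + b * β ^ (q - 1) + b) = 0 := by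
        calc β * (β ^ q + b * β ^ (q - 1) + b)
            = β * β ^ q + b * (β * β ^ (q - 1)) + b * β := by ring
          _ = β ^ (q + 1) + (b * β ^ q + b * β) := by rw [hsplit, pow_succ']; ring
          _ = b * (β ^ q + β) + (b * β ^ q + b * β) := by rw [hrel]
          _ = (b * β ^ q + b * β) + (b * β ^ q + b * β) := by ring
          _ = 0 := CharTwo.add_self_eq_zero _
      have heval : β ^ q + b * β ^ (q - 1) + b = 0 :=
        (mul_eq_zero.mp hzero).resolve_left hβ0
      rw [Multiset.mem_toFinset, Polynomial.mem_roots hQne]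
      show Q.eval β = 0
      rw [hQ]
      simpa using heval
    calc (fib b).card ≤ Q.roots.toFinset.card := Finset.card_le_card hsub
      _ ≤ Multiset.card Q.roots := Multiset.toFinset_card_le _
      _ ≤ Q.natDegree := Polynomial.card_roots' _
      _ ≤ q := by
          refine le_trans (Polynomial.natDegree_add_le _ _) ?_
          rw [Polynomial.natDegree_C, max_le_iff]
          refine ⟨le_trans (Polynomial.natDegree_add_le _ _) ?_, by omega⟩
          rw [Polynomial.natDegree_X_pow, max_le_iff]
          refine ⟨le_refl q, le_trans (Polynomial.natDegree_C_mul_le _ _) ?_⟩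
          rw [Polynomial.natDegree_X_pow]
          omega
  have hcover : S0 = B.biUnion fib := by
    ext β
    simp only [S0, B, fib, Finset.mem_filter, Finset.mem_univ, true_and, Finset.mem_biUnion]
    constructor
    · intro hβ
      obtain ⟨h1, h2⟩ := part1 β hβ
      exact ⟨f β, ⟨h1, h2⟩, hβ, rfl⟩
    · rintro ⟨b, _, hβ, _⟩
      exact hβ
  have hdisj : ∀ b ∈ B, ∀ b' ∈ B, b ≠ b' → Disjoint (fib b) (fib b') := by
    intro b _ b' _ hbb'
    rw [Finset.disjoint_left]
    intro β hβ hβ'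
    simp only [fib, Finset.mem_filter, Finset.mem_univ, true_and] at hβ hβ'
    exact hbb' (hβ.2 ▸ hβ'.2 ▸ rfl)
  have hsum : ∑ b ∈ B, (fib b).card = (q - 1) * q := by
    rw [← Finset.card_biUnion hdisj, ← hcover, hS0card, Nat.sub_one_mul]
  have hall : ∀ b ∈ B, (fib b).card = q := by
    by_contra h
    push_neg at h
    obtain ⟨b0, hb0, hne⟩ := h
    have hlt : ∑ b ∈ B, (fib b).card < ∑ _b ∈ B, q :=
      Finset.sum_lt_sum (fun i _ => hfib_le i) ⟨b0, hb0, lt_of_le_of_ne (hfib_le b0) hne⟩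
    rw [hsum, Finset.sum_const, smul_eq_mul, hBcard] at hlt
    omega
  refine ⟨part1, ?_, ?_⟩
  · intro b hb1 hb2
    have hbB : b ∈ B := by simp [B, hb1, hb2]
    have hset : {β : K | β ^ q ≠ β ∧ β ^ (q + 1) / (β ^ q + β) = b} = ↑(fib b) := by
      ext β; simp [fib, f]
    rw [hset, Set.ncard_coe_finset]
    exact hall b hbB
  · have hset : {β : K | β ^ q ≠ β} = ↑S0 := by ext β; simp [S0]
    rw [hset, Set.ncard_coe_finset, hS0card, Nat.sub_one_mul]
end

section
/- Let q = 2^{2l+1}. The number of α ∈ F_{q^2} \ F_q satisfying α^{2q} + α^2 = α^{q+1} is exactly 2q − 2. -/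
open Polynomial

lemma aux_count (K : Type) [Field K] [Fintype K] {n : ℕ} (hn : 0 < n)
    (hd : n ∣ Fintype.card K - 1) : {x : K | x ^ n = 1}.ncard = n := by
  classical
  obtain ⟨g, hg⟩ := IsCyclic.exists_ofOrder_eq_natCard (α := Kˣ)
  obtain ⟨m, hm⟩ := hd
  have hcard : Nat.card Kˣ = Fintype.card K - 1 := by
    rw [Nat.card_eq_fintype_card, Fintype.card_units]
  have hc1 : 0 < Fintype.card K - 1 := by
    have := Fintype.one_lt_card (α := K)
    omega
  have hm0 : 0 < m := Nat.pos_of_ne_zero fun h => by rw [h, Nat.mul_zero] at hm; omega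
  have hζ : orderOf (g ^ m) = n := by
    rw [orderOf_pow, hg, hcard, hm]
    have : Nat.gcd (n * m) m = m := Nat.gcd_eq_right ⟨n, by ring⟩
    rw [this, Nat.mul_div_cancel _ hm0]
  have hprim : IsPrimitiveRoot ((g ^ m : Kˣ) : K) n := by
    have := IsPrimitiveRoot.orderOf (g ^ m)
    rw [hζ] at this
    exact IsPrimitiveRoot.coe_units_iff.mpr this
  have hset : {x : K | x ^ n = 1} = ↑(nthRootsFinset n (1 : K)) := by
    ext x
    simp [Polynomial.mem_nthRootsFinset hn (1 : K)]
  rw [hset, Set.ncard_coe_finset, hprim.card_nthRootsFinset]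

/-- Let `q = 2^{2l+1}`.  The number of `α ∈ F_{q^2} \ F_q` satisfying
`α^{2q} + α^2 = α^{q+1}` is exactly `2q - 2`. -/
theorem stmt10 (l q : ℕ) (hq : q = 2 ^ (2 * l + 1))
    (K : Type) [Field K] [Fintype K] (hK : Fintype.card K = q ^ 2) :
    Set.ncard {α : K | α ^ q ≠ α ∧ α ^ (2 * q) + α ^ 2 = α ^ (q + 1)} = 2 * q - 2 := by
  have hq2 : 2 ≤ q := by
    rw [hq]; exact Nat.one_lt_two_pow (by omega)
  -- characteristic 2
  have h2 : (2 : K) = 0 := by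
    have hc := FiniteField.cast_card_eq_zero K
    rw [hK, hq] at hc
    push_cast at hc
    rw [pow_eq_zero_iff (show 2 ≠ 0 by omega), pow_eq_zero_iff (show 2*l+1 ≠ 0 by omega)] at hc
    exact hc
  -- 3 ∣ q + 1
  have h3 : 3 ∣ q + 1 := by
    have h4 : 4 ^ l % 3 = 1 := by
      rw [Nat.pow_mod]; simp
    have hq' : q = 2 * 4 ^ l := by
      rw [hq, pow_succ, pow_mul]; ring
    omega
  obtain ⟨m, hm⟩ := h3
  have hd1 : 3 * (q - 1) ∣ Fintype.card K - 1 := by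
    refine ⟨m, ?_⟩
    have h1q : 1 ≤ q := by omega
    rw [hK]
    have h1q2 : 1 ≤ q ^ 2 := Nat.one_le_pow _ _ (by omega)
    zify [h1q, h1q2]
    have hm' : (q : ℤ) + 1 = 3 * m := by exact_mod_cast hm
    linear_combination ((q : ℤ) - 1) * hm'
  have hd2 : (q - 1) ∣ Fintype.card K - 1 := by
    refine ⟨q + 1, ?_⟩
    have h1q : 1 ≤ q := by omega
    rw [hK]
    have h1q2 : 1 ≤ q ^ 2 := Nat.one_le_pow _ _ (by omega)
    zify [h1q, h1q2]
    ring
  -- rewrite the set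
  have hsub : {α : K | α ^ (q - 1) = 1} ⊆ {α : K | α ^ (3 * (q - 1)) = 1} := by
    intro α hα
    simp only [Set.mem_setOf_eq] at hα ⊢
    rw [mul_comm, pow_mul, hα, one_pow]
  have hset : {α : K | α ^ q ≠ α ∧ α ^ (2 * q) + α ^ 2 = α ^ (q + 1)}
      = {α : K | α ^ (3 * (q - 1)) = 1} \ {α : K | α ^ (q - 1) = 1} := by
    ext α
    simp only [Set.mem_setOf_eq, Set.mem_diff]
    have e1 : α ^ q = α ^ (q - 1) * α := by
      conv_lhs => rw [show q = (q - 1) + 1 by omega]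
      rw [pow_succ]
    have e2 : α ^ (2 * q) = (α ^ (q - 1)) ^ 2 * α ^ 2 := by
      rw [show 2 * q = (q - 1) * 2 + 2 by omega, pow_add, pow_mul]
    have e3 : α ^ (q + 1) = α ^ (q - 1) * α ^ 2 := by
      rw [show q + 1 = (q - 1) + 2 by omega, pow_add]
    have e4 : α ^ (3 * (q - 1)) = (α ^ (q - 1)) ^ 3 := by
      rw [mul_comm, pow_mul]
    set x := α ^ (q - 1) with hxdef
    constructor
    · rintro ⟨hne, heq⟩
      have hα : α ≠ 0 := by
        rintro rfl
        exact hne (by rw [zero_pow (by omega : q ≠ 0)])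
      rw [e2, e3] at heq
      have hx : x ^ 2 + x + 1 = 0 := by
        have h0 : (x ^ 2 + x + 1) * α ^ 2 = 0 := by
          linear_combination heq + x * α ^ 2 * h2
        rcases mul_eq_zero.mp h0 with h | h
        · exact h
        · exact absurd h (pow_ne_zero 2 hα)
      refine ⟨?_, ?_⟩
      · rw [e4]; linear_combination (x - 1) * hx
      · intro hx1
        rw [hx1] at hx
        have : (1 : K) = 0 := by linear_combination hx - h2
        exact one_ne_zero this
    · rintro ⟨h1, hne1⟩
      rw [e4] at h1
      have hα : α ≠ 0 := by
        rintro rfl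
        rw [hxdef, zero_pow (by omega : q - 1 ≠ 0)] at h1
        simp at h1
      have hx : x ^ 2 + x + 1 = 0 := by
        have h0 : (x - 1) * (x ^ 2 + x + 1) = 0 := by linear_combination h1
        rcases mul_eq_zero.mp h0 with h | h
        · exact absurd (by linear_combination h) hne1
        · exact h
      refine ⟨?_, ?_⟩
      · rw [e1]
        intro hcontra
        apply hne1
        have : x * α = 1 * α := by rw [one_mul]; exact hcontra
        exact mul_right_cancel₀ hα this
      · rw [e2, e3]
        linear_combination α ^ 2 * hx - x * α ^ 2 * h2
  rw [hset, Set.ncard_diff hsub,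
    aux_count K (by omega) hd1, aux_count K (by omega) hd2]
  omega
end

section
/- Over F_4 = F_2(a) with a^2 + a + 1 = 0, the evaluation code of length 8 obtained by evaluating the space V spanned by {1, x, y, xy} at the 8 F_4-rational points (x, y) ∈ F_4^2 with x ∈ {a, a+1} and y^2 + y = x^2/(x+1), is an [8, 4, 2] linear code in which coordinates come in 4 pairs of equal values; in particular every codeword has even weight and the code has locality 1. -/
/-- The evaluation map sending coefficients `c = (c₀,c₁,c₂,c₃)` to the word
obtained by evaluating `c₀ + c₁·x + c₂·y + c₃·x·y` at the eight points of the
code: the eight coordinates are indexed by `Fin 4 × Fin 2`, where the `Fin 4`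
component enumerates the four rational points `(x, y)` and each point carries
two coordinates (the pair of places above it, on which functions of `V` are
constant). -/
def evalCode {F : Type} [Field F] (pts : Fin 4 → F × F)
    (c : Fin 4 → F) : Fin 4 × Fin 2 → F :=
  fun i => c 0 + c 1 * (pts i.1).1 + c 2 * (pts i.1).2 +
    c 3 * (pts i.1).1 * (pts i.1).2

/-- Over `F_4 = F_2(a)` with `a^2 + a + 1 = 0`, evaluating the space
`V = span{1, x, y, xy}` at the eight rational points lying over the four points
`(x, y) ∈ F_4^2` with `x ∈ {a, a+1}` and `y^2 + y = x^2/(x+1)` (each such point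
contributing a pair of coordinates with equal values) yields an `[8, 4, 2]`
linear code: the evaluation map is injective (dimension `4`), coordinates come
in `4` pairs of equal values, every nonzero codeword has weight at least `2`
(and weight `2` is attained), and every codeword has even weight; in
particular the code has locality `1`. -/
theorem stmt17 (F : Type) [Field F] [Fintype F] (hF : Fintype.card F = 4)
    (a : F) (ha : a ^ 2 + a + 1 = 0)
    (pts : Fin 4 → F × F) (hinj : Function.Injective pts)
    (hpts : ∀ j, ((pts j).1 = a ∨ (pts j).1 = a + 1) ∧
        (pts j).2 ^ 2 + (pts j).2 = (pts j).1 ^ 2 / ((pts j).1 + 1)) :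
    Function.Injective (evalCode pts) ∧
    (∀ c : Fin 4 → F, ∀ j : Fin 4, ∀ s t : Fin 2,
        evalCode pts c (j, s) = evalCode pts c (j, t)) ∧
    (∀ c : Fin 4 → F, c ≠ 0 →
        2 ≤ Set.ncard {i : Fin 4 × Fin 2 | evalCode pts c i ≠ 0}) ∧
    (∃ c : Fin 4 → F, c ≠ 0 ∧
        Set.ncard {i : Fin 4 × Fin 2 | evalCode pts c i ≠ 0} = 2) ∧
    (∀ c : Fin 4 → F, Even (Set.ncard {i : Fin 4 × Fin 2 | evalCode pts c i ≠ 0})) := by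
  classical
  -- characteristic 2
  have h2 : (2 : F) = 0 := by
    obtain ⟨p, hp⟩ := CharP.exists F
    haveI := hp
    obtain ⟨n, hprime, hcard⟩ := FiniteField.card F p
    rw [hF] at hcard
    have hdvd : p ∣ 4 := hcard ▸ dvd_pow_self p n.2.ne'
    have hp2 : p = 2 := by
      have h22 : p ∣ 2 := hprime.dvd_of_dvd_pow (show p ∣ 2 ^ 2 by norm_num at hdvd ⊢; exact hdvd)
      exact (Nat.prime_dvd_prime_iff_eq hprime Nat.prime_two).mp h22
    subst hp2
    exact_mod_cast CharP.cast_eq_zero F 2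
  have ha1 : a + 1 ≠ 0 := fun h => one_ne_zero (show (1:F) = 0 by linear_combination ha - a * h)
  have ha0 : a ≠ 0 := fun h => one_ne_zero (show (1:F) = 0 by linear_combination ha - (a + 1) * h)
  have haa : a + 1 + 1 = a := by linear_combination h2
  have hyy : ∀ j : Fin 4, (pts j).2 = a ∨ (pts j).2 = a + 1 := by
    intro j
    obtain ⟨hx, hy⟩ := hpts j
    have hy1 : (pts j).2 ^ 2 + (pts j).2 = 1 := by
      rcases hx with hx | hx
      · rw [hx] at hy
        have hd : a ^ 2 / (a + 1) = 1 := by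
          rw [div_eq_one_iff_eq ha1]; linear_combination ha - (a + 1) * h2
        rw [hd] at hy; exact hy
      · rw [hx] at hy
        have hd' : a + 1 + 1 ≠ 0 := by rw [haa]; exact ha0
        have hd : (a + 1) ^ 2 / (a + 1 + 1) = 1 := by
          rw [div_eq_one_iff_eq hd']; linear_combination ha - h2
        rw [hd] at hy; exact hy
    have hfac : ((pts j).2 - a) * ((pts j).2 - (a + 1)) = 0 := by
      linear_combination hy1 + ha - (a * (pts j).2 + (pts j).2) * h2
    rcases mul_eq_zero.mp hfac with h | h
    · left; exact sub_eq_zero.mp h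
    · right; exact sub_eq_zero.mp h
  have hx4 : ∀ j : Fin 4, pts j = (a, a) ∨ pts j = (a, a + 1) ∨
      pts j = (a + 1, a) ∨ pts j = (a + 1, a + 1) := by
    intro j
    obtain ⟨hx, _⟩ := hpts j
    rcases hx with hx | hx <;> rcases hyy j with hy | hy
    · left; exact Prod.ext hx hy
    · right; left; exact Prod.ext hx hy
    · right; right; left; exact Prod.ext hx hy
    · right; right; right; exact Prod.ext hx hy
  -- surjectivity onto the four points
  have himg : Finset.image pts Finset.univ =
      ({(a, a), (a, a + 1), (a + 1, a), (a + 1, a + 1)} : Finset (F × F)) := by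
    apply Finset.eq_of_subset_of_card_le
    · intro P hP
      simp only [Finset.mem_image, Finset.mem_univ, true_and] at hP
      obtain ⟨j, hj⟩ := hP
      rcases hx4 j with h | h | h | h <;> simp [← hj, h]
    · have c1 := Finset.card_insert_le (a, a)
        ({(a, a + 1), (a + 1, a), (a + 1, a + 1)} : Finset (F × F))
      have c2 := Finset.card_insert_le (a, a + 1)
        ({(a + 1, a), (a + 1, a + 1)} : Finset (F × F))
      have c3 := Finset.card_insert_le (a + 1, a)
        ({(a + 1, a + 1)} : Finset (F × F))
      have c4 : ({(a + 1, a + 1)} : Finset (F × F)).card = 1 := Finset.card_singleton _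
      have c5 : (Finset.image pts Finset.univ).card = 4 := by
        rw [Finset.card_image_of_injective _ hinj, Finset.card_univ, Fintype.card_fin]
      omega
  have key : ∀ P : F × F,
      P ∈ ({(a, a), (a, a + 1), (a + 1, a), (a + 1, a + 1)} : Finset (F × F)) →
      ∃ j, pts j = P := by
    intro P hP
    rw [← himg] at hP
    simp only [Finset.mem_image, Finset.mem_univ, true_and] at hP
    exact hP
  obtain ⟨j1, hj1⟩ := key (a, a) (by simp)
  obtain ⟨j2, hj2⟩ := key (a, a + 1) (by simp)
  obtain ⟨j3, hj3⟩ := key (a + 1, a) (by simp)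
  obtain ⟨j4, hj4⟩ := key (a + 1, a + 1) (by simp)
  have hinjE : Function.Injective (evalCode pts) := by
    intro c d h
    have e1 := congrFun h (j1, 0)
    have e2 := congrFun h (j2, 0)
    have e3 := congrFun h (j3, 0)
    have e4 := congrFun h (j4, 0)
    simp only [evalCode, hj1] at e1
    simp only [evalCode, hj2] at e2
    simp only [evalCode, hj3] at e3
    simp only [evalCode, hj4] at e4
    have u3 : c 3 = d 3 := by linear_combination e1 - e2 - e3 + e4
    have u2 : c 2 = d 2 := by linear_combination e2 - e1 - a * u3
    have u1 : c 1 = d 1 := by linear_combination e3 - e1 - a * u3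
    have u0 : c 0 = d 0 := by linear_combination e1 - a * u1 - a * u2 - a * a * u3
    funext i
    fin_cases i <;> assumption
  -- support structure
  have hsupp : ∀ c : Fin 4 → F,
      Set.ncard {i : Fin 4 × Fin 2 | evalCode pts c i ≠ 0} =
      2 * (Finset.univ.filter (fun j : Fin 4 => evalCode pts c (j, 0) ≠ 0)).card := by
    intro c
    rw [Set.ncard_eq_toFinset_card']
    have he : {i : Fin 4 × Fin 2 | evalCode pts c i ≠ 0}.toFinset =
        (Finset.univ.filter (fun j : Fin 4 => evalCode pts c (j, 0) ≠ 0)) ×ˢ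
          (Finset.univ : Finset (Fin 2)) := by
      ext ⟨j, s⟩
      simp only [Set.mem_toFinset, Set.mem_setOf_eq, Finset.mem_product, Finset.mem_filter,
        Finset.mem_univ, true_and, and_true]
      exact Iff.rfl
    rw [he, Finset.card_product]
    simp [mul_comm]
  have hzero : evalCode pts (0 : Fin 4 → F) = 0 := by
    funext i; simp [evalCode]
  refine ⟨hinjE, fun c j s t => rfl, ?_, ?_, ?_⟩
  · intro c hc
    rw [hsupp]
    have hne : (Finset.univ.filter (fun j : Fin 4 => evalCode pts c (j, 0) ≠ 0)).Nonempty := by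
      by_contra hcon
      rw [Finset.not_nonempty_iff_eq_empty, Finset.filter_eq_empty_iff] at hcon
      apply hc
      apply hinjE
      rw [hzero]
      funext i
      have := hcon (Finset.mem_univ i.1)
      simp only [not_not] at this
      exact this
    have := Finset.card_pos.mpr hne
    omega
  · refine ⟨![a + 1, a, a, 1], ?_, ?_⟩
    · intro h
      have := congrFun h 3
      simp at this
    · rw [hsupp]
      have hval : ∀ j : Fin 4, evalCode pts ![a + 1, a, a, 1] (j, 0) =
          ((pts j).1 + a) * ((pts j).2 + a) := by
        intro j
        simp only [evalCode]
        simp only [Matrix.cons_val_zero, Matrix.cons_val_one, Matrix.head_cons,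
          Matrix.cons_val_two, Matrix.tail_cons, Matrix.cons_val_three]
        linear_combination (a + 1) * h2 - ha
      have hset : (Finset.univ.filter
          (fun j : Fin 4 => evalCode pts ![a + 1, a, a, 1] (j, 0) ≠ 0)) = {j4} := by
        ext j
        simp only [Finset.mem_filter, Finset.mem_univ, true_and, Finset.mem_singleton]
        constructor
        · intro hne
          rcases hx4 j with h | h | h | h
          · exfalso; apply hne; rw [hval, h]
            show (a + a) * (a + a) = 0
            linear_combination (2 * a ^ 2) * h2
          · exfalso; apply hne; rw [hval, h]
            show (a + a) * (a + 1 + a) = 0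
            linear_combination (2 * a ^ 2 + a) * h2
          · exfalso; apply hne; rw [hval, h]
            show (a + 1 + a) * (a + a) = 0
            linear_combination (2 * a ^ 2 + a) * h2
          · exact hinj (h.trans hj4.symm)
        · intro hj
          subst hj
          rw [hval, hj4]
          show (a + 1 + a) * (a + 1 + a) ≠ 0
          have : (a + 1 + a) * (a + 1 + a) = 1 := by
            linear_combination (2 * a ^ 2 + 2 * a) * h2
          rw [this]; exact one_ne_zero
      rw [hset, Finset.card_singleton]
  · intro c
    rw [hsupp]
    exact ⟨_, two_mul _⟩
end
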